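/- Let v ≡ 1 (mod 4) and s ≡ 1 (mod 2) with v ≤ s ≤ 2v-1. Then there exists a multiply constant-weight code MCWC(2,v;2,s;6) of size s(v-1)/4 if and only if there exists a skew almost-resolvable square SAS(s,v). -/

import Mathlib

open Finset

/-- A skew almost-resolvable square `SAS(s,v)`: an `s × s` array whose cells are
either empty or contain a pair of points of a `v`-set, such that (1) for
`i ≠ j` at most one of the cells `(i,j)`, `(j,i)` is filled, (2) the diagonal is
empty, (3) every filled cell contains exactly a pair, (4) no pair of points
appears in more than one cell, and (5) for each index `i` the pairs in row `i`
together with those in column `i` partition `V ∖ {x}` for some point `x`. -/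
def IsSAS (s v : ℕ) (A : Fin s → Fin s → Finset (Fin v)) : Prop :=
  (∀ i j : Fin s, i ≠ j → A i j = ∅ ∨ A j i = ∅) ∧
  (∀ i : Fin s, A i i = ∅) ∧
  (∀ i j : Fin s, A i j = ∅ ∨ (A i j).card = 2) ∧
  (∀ i j i' j' : Fin s, ∀ a b : Fin v, a ≠ b →
    a ∈ A i j → b ∈ A i j → a ∈ A i' j' → b ∈ A i' j' → i = i' ∧ j = j') ∧
  (∀ i : Fin s, ∃ x : Fin v, ∀ y : Fin v,
    (univ.filter (fun j => y ∈ A i j)).card + (univ.filter (fun j => y ∈ A j i)).card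
      = if y = x then 0 else 1)

section helpers
variable {α : Type*} [DecidableEq α]

def Dset (A B : Finset α) : Finset α := (A \ B) ∪ (B \ A)

lemma dset_card_add {A B : Finset α} (hA : A.card = 2) (hB : B.card = 2) :
    (Dset A B).card + 2 * (A ∩ B).card = 4 := by
  have h1 : Disjoint (A \ B) (B \ A) := disjoint_sdiff_sdiff
  have e1 : (A ∩ B).card + (A \ B).card = A.card := card_inter_add_card_sdiff A B
  have e2 : (B ∩ A).card + (B \ A).card = B.card := card_inter_add_card_sdiff B A
  rw [inter_comm] at e2
  rw [Dset, card_union_of_disjoint h1]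
  omega

lemma inter_card_le_one {A B : Finset α} (hA : A.card = 2) (hB : B.card = 2) (hne : A ≠ B) :
    (A ∩ B).card ≤ 1 := by
  by_contra h
  push_neg at h
  have hsub : A ∩ B ⊆ A := inter_subset_left
  have hle : (A ∩ B).card ≤ 2 := hA ▸ card_le_card hsub
  have hAeq : A ∩ B = A := eq_of_subset_of_card_le hsub (by omega)
  have hBeq : A ∩ B = B := eq_of_subset_of_card_le inter_subset_right (by omega)
  exact hne (hAeq ▸ hBeq)

lemma dset_card_ge {A B : Finset α} (hA : A.card = 2) (hB : B.card = 2) (hne : A ≠ B) :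
    2 ≤ (Dset A B).card := by
  have h1 := dset_card_add hA hB
  have h2 := inter_card_le_one hA hB hne
  omega

lemma dset_card_disj {A B : Finset α} (hA : A.card = 2) (hB : B.card = 2)
    (hd : A ∩ B = ∅) : (Dset A B).card = 4 := by
  have := dset_card_add hA hB
  rw [hd] at this; simpa using this

lemma dset_card_le_of_inter {A B : Finset α} (hA : A.card = 2) (hB : B.card = 2)
    (hd : (A ∩ B).Nonempty) : (Dset A B).card ≤ 2 := by
  have h1 := dset_card_add hA hB
  have h2 : 1 ≤ (A ∩ B).card := card_pos.mpr hd
  omega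

lemma dset_card_le {A B : Finset α} (hA : A.card = 2) (hB : B.card = 2) :
    (Dset A B).card ≤ 4 := by
  have := dset_card_add hA hB
  omega

lemma filter_ne_eq (f g : α → Bool) (S : Finset α) :
    S.filter (fun i => f i ≠ g i)
      = Dset (S.filter (fun i => f i = true)) (S.filter (fun i => g i = true)) := by
  ext i
  simp only [Dset, mem_filter, mem_union, mem_sdiff, not_and]
  cases hf : f i <;> cases hg : g i <;> simp [hf, hg]

def PS {v s : ℕ} (c : Fin v ⊕ Fin s → Bool) : Finset (Fin v) :=
  univ.filter fun i => c (Sum.inl i) = true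
def QS {v s : ℕ} (c : Fin v ⊕ Fin s → Bool) : Finset (Fin s) :=
  univ.filter fun j => c (Sum.inr j) = true

lemma ham_eq {v s : ℕ} (u w : Fin v ⊕ Fin s → Bool) :
    hammingDist u w = (Dset (PS u) (PS w)).card + (Dset (QS u) (QS w)).card := by
  rw [hammingDist]
  have : (univ.filter fun x : Fin v ⊕ Fin s => u x ≠ w x).card
      = ∑ x : Fin v ⊕ Fin s, if u x ≠ w x then 1 else 0 := card_filter _ _
  rw [this, Fintype.sum_sum_type]
  rw [← card_filter, ← card_filter, filter_ne_eq, filter_ne_eq]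
  rfl

lemma pair_eq' {n : ℕ} {a b c d : Fin n} (hab : a ≠ b) (hcd : c ≠ d)
    (h : ({a, b} : Finset (Fin n)) = {c, d}) :
    (a = c ∧ b = d) ∨ (a = d ∧ b = c) := by
  have ha : a = c ∨ a = d := by
    have : a ∈ ({c, d} : Finset (Fin n)) := h ▸ (by simp)
    simpa using this
  have hb : b = c ∨ b = d := by
    have : b ∈ ({c, d} : Finset (Fin n)) := h ▸ (by simp)
    simpa using this
  have hc : c = a ∨ c = b := by
    have : c ∈ ({a, b} : Finset (Fin n)) := h ▸ (by simp)
    simpa using this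
  simp only [Fin.ext_iff] at ha hb hc hab hcd ⊢
  omega

lemma pair_eq_lt {n : ℕ} {a b c d : Fin n} (hab : a < b) (hcd : c < d)
    (h : ({a, b} : Finset (Fin n)) = {c, d}) : a = c ∧ b = d := by
  have h2 := pair_eq' hab.ne hcd.ne h
  simp only [Fin.lt_def] at hab hcd
  simp only [Fin.ext_iff] at h2 ⊢
  omega

lemma eq_pair_of_mem {A : Finset α} (hA : A.card = 2) {a b : α} (hab : a ≠ b)
    (ha : a ∈ A) (hb : b ∈ A) : A = {a, b} := by
  have hsub : ({a, b} : Finset α) ⊆ A := by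
    intro x hx; simp only [mem_insert, mem_singleton] at hx
    rcases hx with rfl | rfl <;> assumption
  exact (eq_of_subset_of_card_le hsub (by rw [hA, card_pair hab])).symm

lemma sum_filter_card {β γ : Type*} [DecidableEq γ] [Fintype β] [Fintype γ]
    (B : β → Finset γ) :
    ∑ y : γ, (univ.filter fun j : β => y ∈ B j).card = ∑ j : β, (B j).card := by
  have h1 : ∀ y : γ, (univ.filter fun j : β => y ∈ B j).card
      = ∑ j : β, if y ∈ B j then 1 else 0 := fun y => card_filter _ _
  simp only [h1]
  rw [Finset.sum_comm]
  congr 1; funext j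
  rw [← card_filter]
  congr 1
  ext y; simp

end helpers

-- contribution lemma: a point in a filled cell contributes to the row/col count at each of its indices
lemma count_ge {s v : ℕ} (A : Fin s → Fin s → Finset (Fin v))
    (hdiag : ∀ i : Fin s, A i i = ∅)
    {p q : Fin s × Fin s} (hpq : p ≠ q) {a : Fin v}
    (hap : a ∈ A p.1 p.2) (haq : a ∈ A q.1 q.2) {k : Fin s}
    (hkp : k = p.1 ∨ k = p.2) (hkq : k = q.1 ∨ k = q.2) :
    2 ≤ (univ.filter (fun j => a ∈ A k j)).card + (univ.filter (fun j => a ∈ A j k)).card := by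
  have hp12 : p.1 ≠ p.2 := by
    rintro h; rw [h] at hap; rw [hdiag] at hap; exact absurd hap (notMem_empty a)
  have hq12 : q.1 ≠ q.2 := by
    rintro h; rw [h] at haq; rw [hdiag] at haq; exact absurd haq (notMem_empty a)
  rcases hkp with rfl | rfl <;> rcases hkq with hk | hk
  · -- k = p.1 = q.1 : p.2, q.2 in row filter
    have h2 : p.2 ≠ q.2 := by
      intro h; exact hpq (Prod.ext hk (by rw [h]))
    have hsub : ({p.2, q.2} : Finset (Fin s)) ⊆ univ.filter (fun j => a ∈ A p.1 j) := by
      intro x hx; simp only [mem_insert, mem_singleton] at hx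
      rcases hx with rfl | rfl
      · simp [hap]
      · simp [hk ▸ haq]
    have := card_le_card hsub
    rw [card_pair h2] at this
    omega
  · -- k = p.1 = q.2 : p.2 in row filter, q.1 in col filter
    have h1 : p.2 ∈ univ.filter (fun j => a ∈ A p.1 j) := by simp [hap]
    have h2 : q.1 ∈ univ.filter (fun j => a ∈ A j p.1) := by simp [hk ▸ haq]
    have c1 := card_pos.mpr ⟨_, h1⟩
    have c2 := card_pos.mpr ⟨_, h2⟩
    omega
  · -- k = p.2 = q.1 : p.1 in col filter, q.2 in row filter
    have h1 : p.1 ∈ univ.filter (fun j => a ∈ A j p.2) := by simp [hap]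
    have h2 : q.2 ∈ univ.filter (fun j => a ∈ A p.2 j) := by simp [hk ▸ haq]
    have c1 := card_pos.mpr ⟨_, h1⟩
    have c2 := card_pos.mpr ⟨_, h2⟩
    omega
  · -- k = p.2 = q.2 : p.1, q.1 in col filter
    have h2 : p.1 ≠ q.1 := by
      intro h; exact hpq (Prod.ext h (by rw [hk]))
    have hsub : ({p.1, q.1} : Finset (Fin s)) ⊆ univ.filter (fun j => a ∈ A j p.2) := by
      intro x hx; simp only [mem_insert, mem_singleton] at hx
      rcases hx with rfl | rfl
      · simp [hap]
      · simp [hk ▸ haq]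
    have := card_le_card hsub
    rw [card_pair h2] at this
    omega

lemma sas_to_code {v s : ℕ} (hv : v % 4 = 1)
    (A : Fin s → Fin s → Finset (Fin v)) (h : IsSAS s v A) :
    ∃ C : Finset (Fin v ⊕ Fin s → Bool),
      (∀ c ∈ C, (univ.filter (fun i : Fin v => c (Sum.inl i) = true)).card = 2) ∧
      (∀ c ∈ C, (univ.filter (fun i : Fin s => c (Sum.inr i) = true)).card = 2) ∧
      (∀ u ∈ C, ∀ w ∈ C, u ≠ w → 6 ≤ hammingDist u w) ∧
      4 * C.card = s * (v - 1) := by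
  obtain ⟨hskew, hdiag, hcard, huniq, hres⟩ := h
  classical
  set F : Finset (Fin s × Fin s) := (univ ×ˢ univ).filter (fun p => A p.1 p.2 ≠ ∅) with hF
  set cw : Fin s × Fin s → (Fin v ⊕ Fin s → Bool) := fun p x =>
    match x with
    | Sum.inl a => decide (a ∈ A p.1 p.2)
    | Sum.inr j => decide (j = p.1 ∨ j = p.2) with hcw
  have hP : ∀ p, PS (cw p) = A p.1 p.2 := by
    intro p; ext a; simp [PS, hcw]
  have hQ : ∀ p, QS (cw p) = {p.1, p.2} := by
    intro p; ext j; simp [QS, hcw]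
  have hmemF : ∀ p : Fin s × Fin s, p ∈ F ↔ A p.1 p.2 ≠ ∅ := by
    intro p; simp [hF]
  have hne12 : ∀ p ∈ F, p.1 ≠ p.2 := by
    intro p hp h
    exact (hmemF p).1 hp (h ▸ hdiag p.1)
  have hc2 : ∀ p ∈ F, (A p.1 p.2).card = 2 := by
    intro p hp
    rcases hcard p.1 p.2 with h | h
    · exact absurd h ((hmemF p).1 hp)
    · exact h
  have hpair : ∀ p ∈ F, ∃ a b : Fin v, a ≠ b ∧ a ∈ A p.1 p.2 ∧ b ∈ A p.1 p.2 := by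
    intro p hp
    obtain ⟨a, b, hab, hs⟩ := card_eq_two.mp (hc2 p hp)
    exact ⟨a, b, hab, by simp [hs], by simp [hs]⟩
  have hsetinj : ∀ p ∈ F, ∀ q ∈ F, A p.1 p.2 = A q.1 q.2 → p = q := by
    intro p hp q hq he
    obtain ⟨a, b, hab, ha, hb⟩ := hpair p hp
    obtain ⟨h1, h2⟩ := huniq p.1 p.2 q.1 q.2 a b hab ha hb (he ▸ ha) (he ▸ hb)
    exact Prod.ext h1 h2
  have hQinj : ∀ p ∈ F, ∀ q ∈ F, ({p.1, p.2} : Finset (Fin s)) = {q.1, q.2} → p = q := by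
    intro p hp q hq he
    rcases pair_eq' (hne12 p hp) (hne12 q hq) he with ⟨h1, h2⟩ | ⟨h1, h2⟩
    · exact Prod.ext h1 h2
    · exfalso
      rcases hskew p.1 p.2 (hne12 p hp) with h | h
      · exact (hmemF p).1 hp h
      · apply (hmemF q).1 hq
        rw [← h1, ← h2]; exact h
  -- shared point implies disjoint index sets
  have hdisj : ∀ p ∈ F, ∀ q ∈ F, p ≠ q → (A p.1 p.2 ∩ A q.1 q.2).Nonempty →
      ({p.1, p.2} : Finset (Fin s)) ∩ {q.1, q.2} = ∅ := by
    intro p hp q hq hpq ⟨a, ha⟩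
    rw [mem_inter] at ha
    by_contra hne
    obtain ⟨k, hk⟩ := nonempty_of_ne_empty hne
    rw [mem_inter, mem_insert, mem_singleton, mem_insert, mem_singleton] at hk
    have h2 := count_ge A hdiag hpq ha.1 ha.2 hk.1 hk.2
    obtain ⟨x, hx⟩ := hres k
    rw [hx a] at h2
    split_ifs at h2 <;> omega
  -- injectivity of cw on F
  have hcwinj : ∀ p ∈ F, ∀ q ∈ F, cw p = cw q → p = q := by
    intro p hp q hq he
    apply hsetinj p hp q hq
    rw [← hP, ← hP, he]
  refine ⟨F.image cw, ?_, ?_, ?_, ?_⟩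
  · intro c hc
    obtain ⟨p, hp, rfl⟩ := mem_image.mp hc
    have := hP p
    rw [PS] at this
    rw [this]
    exact hc2 p hp
  · intro c hc
    obtain ⟨p, hp, rfl⟩ := mem_image.mp hc
    have := hQ p
    rw [QS] at this
    rw [this]
    exact card_pair (hne12 p hp)
  · intro u hu w hw huw
    obtain ⟨p, hp, rfl⟩ := mem_image.mp hu
    obtain ⟨q, hq, rfl⟩ := mem_image.mp hw
    have hpq : p ≠ q := fun h => huw (h ▸ rfl)
    rw [ham_eq, hP, hP, hQ, hQ]
    have hA2p := hc2 p hp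
    have hA2q := hc2 q hq
    have hQ2p : ({p.1, p.2} : Finset (Fin s)).card = 2 := card_pair (hne12 p hp)
    have hQ2q : ({q.1, q.2} : Finset (Fin s)).card = 2 := card_pair (hne12 q hq)
    by_cases hint : (A p.1 p.2 ∩ A q.1 q.2).Nonempty
    · have h4 := dset_card_disj hQ2p hQ2q (hdisj p hp q hq hpq hint)
      have h2 := dset_card_ge hA2p hA2q (fun h => hpq (hsetinj p hp q hq h))
      omega
    · rw [not_nonempty_iff_eq_empty] at hint
      have h4 := dset_card_disj hA2p hA2q hint
      have h2 := dset_card_ge hQ2p hQ2q (fun h => hpq (hQinj p hp q hq h))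
      omega
  · -- counting
    rw [card_image_of_injOn (fun p hp q hq => hcwinj p hp q hq)]
    -- ∑ over rows of (v-1) = total count
    have hrow : ∀ k : Fin s, ∑ y : Fin v,
        ((univ.filter (fun j => y ∈ A k j)).card + (univ.filter (fun j => y ∈ A j k)).card)
        = v - 1 := by
      intro k
      obtain ⟨x, hx⟩ := hres k
      calc ∑ y : Fin v, ((univ.filter (fun j => y ∈ A k j)).card
              + (univ.filter (fun j => y ∈ A j k)).card)
          = ∑ y : Fin v, if y = x then 0 else 1 := by
            exact Finset.sum_congr rfl (fun y _ => hx y)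
        _ = (univ.filter (fun y => y ≠ x)).card := by
            rw [card_filter]
            apply Finset.sum_congr rfl
            intro y _
            by_cases h : y = x <;> simp [h]
        _ = v - 1 := by
            rw [filter_ne', card_erase_of_mem (mem_univ x), card_univ, Fintype.card_fin]
    have htot : s * (v - 1) = 2 * ∑ k : Fin s, ∑ j : Fin s, (A k j).card := by
      calc s * (v - 1) = ∑ _k : Fin s, (v - 1) := by
            rw [Finset.sum_const, card_univ, Fintype.card_fin, smul_eq_mul, mul_comm]
        _ = ∑ k : Fin s, ∑ y : Fin v,
              ((univ.filter (fun j => y ∈ A k j)).card + (univ.filter (fun j => y ∈ A j k)).card) :=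
            Finset.sum_congr rfl (fun k _ => (hrow k).symm)
        _ = (∑ k : Fin s, ∑ y : Fin v, (univ.filter (fun j => y ∈ A k j)).card)
            + (∑ k : Fin s, ∑ y : Fin v, (univ.filter (fun j => y ∈ A j k)).card) := by
            simp [Finset.sum_add_distrib]
        _ = (∑ k : Fin s, ∑ j : Fin s, (A k j).card)
            + (∑ k : Fin s, ∑ j : Fin s, (A j k).card) := by
            congr 1
            · exact Finset.sum_congr rfl (fun k _ => sum_filter_card (fun j => A k j))
            · exact Finset.sum_congr rfl (fun k _ => sum_filter_card (fun j => A j k))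
        _ = 2 * ∑ k : Fin s, ∑ j : Fin s, (A k j).card := by
            rw [Finset.sum_comm (f := fun k j => (A j k).card)]
            ring
    have hFsum : ∑ k : Fin s, ∑ j : Fin s, (A k j).card = 2 * F.card := by
      rw [← Finset.sum_product']
      rw [← Finset.sum_filter_add_sum_filter_not (univ ×ˢ univ) (fun p => A p.1 p.2 ≠ ∅)]
      have h1 : ∑ p ∈ F, (A p.1 p.2).card = 2 * F.card := by
        rw [Finset.sum_congr rfl (fun p hp => hc2 p hp), Finset.sum_const, smul_eq_mul, mul_comm]
      have h2 : ∑ p ∈ (univ ×ˢ univ).filter (fun p => ¬ A p.1 p.2 ≠ ∅), (A p.1 p.2).card = 0 := by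
        apply Finset.sum_eq_zero
        intro p hp
        rw [mem_filter] at hp
        rw [not_not.mp hp.2, card_empty]
      rw [h2, h1]
      rfl
    omega

lemma exists_missing_point (v : ℕ) (hv : 1 ≤ v) (t : Fin v → ℕ)
    (hle : ∀ y, t y ≤ 1) (hsum : ∑ y : Fin v, t y = v - 1) :
    ∃ x : Fin v, ∀ y : Fin v, t y = if y = x then 0 else 1 := by
  have hzero : (univ.filter (fun y => t y = 0)).card = 1 := by
    have hsplit := card_filter_add_card_filter_not
      (s := (univ : Finset (Fin v))) (p := fun y => t y = 0)
    have h1 : ∑ y : Fin v, t y = ∑ _y ∈ univ.filter (fun y => ¬ t y = 0), 1 := by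
      rw [← Finset.sum_filter_add_sum_filter_not univ (fun y => t y = 0) t]
      have hz : ∑ y ∈ univ.filter (fun y => t y = 0), t y = 0 :=
        Finset.sum_eq_zero fun y hy => (mem_filter.mp hy).2
      rw [hz, zero_add]
      refine Finset.sum_congr rfl fun y hy => ?_
      have h2 := (mem_filter.mp hy).2
      have h3 := hle y
      omega
    rw [hsum, Finset.sum_const, smul_eq_mul, mul_one] at h1
    have hcu : (univ : Finset (Fin v)).card = v := by rw [card_univ, Fintype.card_fin]
    omega
  obtain ⟨x, hx⟩ := card_eq_one.mp hzero
  refine ⟨x, fun y => ?_⟩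
  by_cases hxy : y = x
  · subst hxy
    have hmemx : y ∈ univ.filter (fun y => t y = 0) := by
      rw [hx]; exact mem_singleton_self y
    rw [if_pos rfl]
    exact (mem_filter.mp hmemx).2
  · have hy : y ∉ univ.filter (fun y => t y = 0) := by
      rw [hx]; simp [hxy]
    have h0 : ¬ t y = 0 := fun h => hy (mem_filter.mpr ⟨mem_univ y, h⟩)
    have h1 := hle y
    rw [if_neg hxy]
    omega

lemma code_to_sas {v s : ℕ} (hv : v % 4 = 1)
    (C : Finset (Fin v ⊕ Fin s → Bool))
    (hw1 : ∀ c ∈ C, (univ.filter (fun i : Fin v => c (Sum.inl i) = true)).card = 2)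
    (hw2 : ∀ c ∈ C, (univ.filter (fun i : Fin s => c (Sum.inr i) = true)).card = 2)
    (hd : ∀ u ∈ C, ∀ w ∈ C, u ≠ w → 6 ≤ hammingDist u w)
    (hsize : 4 * C.card = s * (v - 1)) :
    ∃ A : Fin s → Fin s → Finset (Fin v), IsSAS s v A := by
  classical
  have hP2 : ∀ c ∈ C, (PS c).card = 2 := hw1
  have hQ2 : ∀ c ∈ C, (QS c).card = 2 := hw2
  have hDempty : ∀ (α : Type) [DecidableEq α] (X : Finset α), (Dset X X).card = 0 := by
    intro α _ X; simp [Dset]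
  have huniqP : ∀ c ∈ C, ∀ c' ∈ C, PS c = PS c' → c = c' := by
    intro c hc c' hc' he
    by_contra hne
    have h6 := hd c hc c' hc' hne
    rw [ham_eq, he, hDempty] at h6
    have := dset_card_le (hQ2 c hc) (hQ2 c' hc')
    omega
  have huniqQ : ∀ c ∈ C, ∀ c' ∈ C, QS c = QS c' → c = c' := by
    intro c hc c' hc' he
    by_contra hne
    have h6 := hd c hc c' hc' hne
    rw [ham_eq, he, hDempty] at h6
    have := dset_card_le (hP2 c hc) (hP2 c' hc')
    omega
  have hshare : ∀ c ∈ C, ∀ c' ∈ C, c ≠ c' → (QS c ∩ QS c').Nonempty →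
      PS c ∩ PS c' = ∅ := by
    intro c hc c' hc' hne hq
    by_contra hp
    have h6 := hd c hc c' hc' hne
    rw [ham_eq] at h6
    have h1 := dset_card_le_of_inter (hP2 c hc) (hP2 c' hc') (nonempty_of_ne_empty hp)
    have h2 := dset_card_le_of_inter (hQ2 c hc) (hQ2 c' hc') hq
    omega
  set A : Fin s → Fin s → Finset (Fin v) := fun i j =>
    if i < j then
      (C.filter (fun c => c (Sum.inr i) = true ∧ c (Sum.inr j) = true)).biUnion (fun c => PS c)
    else ∅ with hA
  have hmem : ∀ (i j : Fin s) (y : Fin v), y ∈ A i j ↔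
      i < j ∧ ∃ c ∈ C, c (Sum.inr i) = true ∧ c (Sum.inr j) = true ∧ y ∈ PS c := by
    intro i j y
    by_cases h : i < j
    · simp only [hA, if_pos h, mem_biUnion, mem_filter]
      constructor
      · rintro ⟨c, ⟨hc, h1, h2⟩, hy⟩; exact ⟨h, c, hc, h1, h2, hy⟩
      · rintro ⟨-, c, hc, h1, h2, hy⟩; exact ⟨c, ⟨hc, h1, h2⟩, hy⟩
    · simp [hA, if_neg h, h]
  have hQeq : ∀ {i j : Fin s}, i ≠ j → ∀ c ∈ C, c (Sum.inr i) = true →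
      c (Sum.inr j) = true → QS c = {i, j} := by
    intro i j hij c hc h1 h2
    have hsub : ({i, j} : Finset (Fin s)) ⊆ QS c := by
      intro x hx; simp only [mem_insert, mem_singleton] at hx
      rcases hx with rfl | rfl <;> simp [QS, h1, h2]
    exact (eq_of_subset_of_card_le hsub (by rw [hQ2 c hc, card_pair hij])).symm
  have hcell : ∀ (i j : Fin s), i < j → ∀ c ∈ C, c (Sum.inr i) = true →
      c (Sum.inr j) = true → A i j = PS c := by
    intro i j hij c hc h1 h2
    have hfil : C.filter (fun c => c (Sum.inr i) = true ∧ c (Sum.inr j) = true) = {c} := by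
      apply eq_singleton_iff_unique_mem.mpr
      refine ⟨mem_filter.mpr ⟨hc, h1, h2⟩, ?_⟩
      intro c' hc'
      rw [mem_filter] at hc'
      exact huniqQ c' hc'.1 c hc
        ((hQeq hij.ne c' hc'.1 hc'.2.1 hc'.2.2).trans (hQeq hij.ne c hc h1 h2).symm)
    rw [hA]
    simp only [if_pos hij, hfil, singleton_biUnion]
  have hcellE : ∀ (i j : Fin s), (A i j).Nonempty →
      ∃ c ∈ C, A i j = PS c ∧ i < j ∧ QS c = {i, j} := by
    intro i j ⟨y, hy⟩
    obtain ⟨hij, c, hc, h1, h2, -⟩ := (hmem i j y).mp hy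
    exact ⟨c, hc, hcell i j hij c hc h1 h2, hij, hQeq hij.ne c hc h1 h2⟩
  -- the count sets
  have hTle : ∀ (y : Fin v) (k : Fin s),
      (C.filter (fun c => c (Sum.inr k) = true ∧ c (Sum.inl y) = true)).card ≤ 1 := by
    intro y k
    apply card_le_one.mpr
    intro c hc c' hc'
    rw [mem_filter] at hc hc'
    by_contra hne
    have hq : (QS c ∩ QS c').Nonempty :=
      ⟨k, mem_inter.mpr ⟨by simp [QS, hc.2.1], by simp [QS, hc'.2.1]⟩⟩
    have := hshare c hc.1 c' hc'.1 hne hq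
    have hy : y ∈ PS c ∩ PS c' :=
      mem_inter.mpr ⟨by simp [PS, hc.2.2], by simp [PS, hc'.2.2]⟩
    rw [this] at hy
    exact absurd hy (notMem_empty y)
  have hcnt : ∀ (k : Fin s) (y : Fin v),
      (univ.filter (fun j => y ∈ A k j)).card + (univ.filter (fun j => y ∈ A j k)).card
      = (C.filter (fun c => c (Sum.inr k) = true ∧ c (Sum.inl y) = true)).card := by
    intro k y
    set T := C.filter (fun c => c (Sum.inr k) = true ∧ c (Sum.inl y) = true) with hT
    rcases eq_empty_or_nonempty T with hTe | ⟨c, hc⟩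
    · have e1 : univ.filter (fun j => y ∈ A k j) = ∅ := by
        apply filter_eq_empty_iff.mpr
        intro j _ hyj
        obtain ⟨hkj, c, hc, h1, h2, hy⟩ := (hmem k j y).mp hyj
        have : c ∈ T := mem_filter.mpr ⟨hc, h1, by simpa [PS] using hy⟩
        rw [hTe] at this; exact absurd this (notMem_empty c)
      have e2 : univ.filter (fun j => y ∈ A j k) = ∅ := by
        apply filter_eq_empty_iff.mpr
        intro j _ hyj
        obtain ⟨hjk, c, hc, h1, h2, hy⟩ := (hmem j k y).mp hyj
        have : c ∈ T := mem_filter.mpr ⟨hc, h2, by simpa [PS] using hy⟩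
        rw [hTe] at this; exact absurd this (notMem_empty c)
      rw [e1, e2, hTe]; simp
    · have hTc : T = {c} := eq_singleton_iff_unique_mem.mpr
        ⟨hc, fun c' hc' => card_le_one.mp (hTle y k) c' hc' c hc⟩
      rw [mem_filter] at hc
      obtain ⟨hcC, hck, hcy⟩ := hc
      have hkQ : k ∈ QS c := by simp [QS, hck]
      obtain ⟨a1, b1, hab1, hQs⟩ := card_eq_two.mp (hQ2 c hcC)
      have hm : ∃ m : Fin s, m ≠ k ∧ QS c = {k, m} := by
        rw [hQs] at hkQ
        simp only [mem_insert, mem_singleton] at hkQ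
        rcases hkQ with rfl | rfl
        · exact ⟨b1, fun h => hab1 h.symm, hQs⟩
        · exact ⟨a1, hab1, by rw [hQs, pair_comm]⟩
      obtain ⟨m, hmk, hQcm⟩ := hm
      have hcm : c (Sum.inr m) = true := by
        have : m ∈ QS c := by rw [hQcm]; simp
        simpa [QS] using this
      have hyP : y ∈ PS c := by simp [PS, hcy]
      -- a codeword appearing in a cell of row/col k must be c
      have hkey : ∀ (c' : Fin v ⊕ Fin s → Bool), c' ∈ C → c' (Sum.inr k) = true →
          y ∈ PS c' → c' = c := by
        intro c' hc' h1 h2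
        have : c' ∈ T := mem_filter.mpr ⟨hc', h1, by simpa [PS] using h2⟩
        rw [hTc] at this; exact mem_singleton.mp this
      rcases lt_or_gt_of_ne hmk with hlt | hgt
      · -- m < k : filter1 empty, filter2 = {m}
        have e1 : univ.filter (fun j => y ∈ A k j) = ∅ := by
          apply filter_eq_empty_iff.mpr
          intro j _ hyj
          obtain ⟨hkj, c', hc', h1, h2, hy⟩ := (hmem k j y).mp hyj
          have := hkey c' hc' h1 hy
          subst this
          have : j ∈ QS c' := by simp [QS, h2]
          rw [hQcm] at this
          simp only [mem_insert, mem_singleton] at this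
          rcases this with rfl | rfl
          · exact absurd hkj (lt_irrefl _)
          · exact absurd (hlt.trans hkj) (lt_irrefl _)
        have e2 : univ.filter (fun j => y ∈ A j k) = {m} := by
          ext j
          simp only [mem_filter, mem_univ, true_and, mem_singleton]
          constructor
          · intro hyj
            obtain ⟨hjk, c', hc', h1, h2, hy⟩ := (hmem j k y).mp hyj
            have := hkey c' hc' h2 hy
            subst this
            have : j ∈ QS c' := by simp [QS, h1]
            rw [hQcm] at this
            simp only [mem_insert, mem_singleton] at this
            rcases this with rfl | rfl
            · exact absurd hjk (lt_irrefl _)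
            · rfl
          · intro hj
            rw [hj]
            exact (hmem m k y).mpr ⟨hlt, c, hcC, hcm, hck, hyP⟩
        rw [e1, e2, hTc]; simp
      · -- k < m : filter1 = {m}, filter2 empty
        have e1 : univ.filter (fun j => y ∈ A k j) = {m} := by
          ext j
          simp only [mem_filter, mem_univ, true_and, mem_singleton]
          constructor
          · intro hyj
            obtain ⟨hkj, c', hc', h1, h2, hy⟩ := (hmem k j y).mp hyj
            have := hkey c' hc' h1 hy
            subst this
            have : j ∈ QS c' := by simp [QS, h2]
            rw [hQcm] at this
            simp only [mem_insert, mem_singleton] at this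
            rcases this with rfl | rfl
            · exact absurd hkj (lt_irrefl _)
            · rfl
          · intro hj
            rw [hj]
            exact (hmem k m y).mpr ⟨hgt, c, hcC, hck, hcm, hyP⟩
        have e2 : univ.filter (fun j => y ∈ A j k) = ∅ := by
          apply filter_eq_empty_iff.mpr
          intro j _ hyj
          obtain ⟨hjk, c', hc', h1, h2, hy⟩ := (hmem j k y).mp hyj
          have := hkey c' hc' h2 hy
          subst this
          have : j ∈ QS c' := by simp [QS, h1]
          rw [hQcm] at this
          simp only [mem_insert, mem_singleton] at this
          rcases this with rfl | rfl
          · exact absurd hjk (lt_irrefl _)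
          · exact absurd (hgt.trans hjk) (lt_irrefl _)
        rw [e1, e2, hTc]; simp
  -- degree counting
  set deg : Fin s → ℕ := fun k => (C.filter (fun c => c (Sum.inr k) = true)).card with hdeg
  have hdeg2 : ∀ k : Fin s, ∑ y : Fin v,
      (C.filter (fun c => c (Sum.inr k) = true ∧ c (Sum.inl y) = true)).card = 2 * deg k := by
    intro k
    calc ∑ y : Fin v, (C.filter (fun c => c (Sum.inr k) = true ∧ c (Sum.inl y) = true)).card
        = ∑ y : Fin v, ∑ c ∈ C.filter (fun c => c (Sum.inr k) = true),
            (if c (Sum.inl y) = true then 1 else 0) := by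
          refine Finset.sum_congr rfl fun y _ => ?_
          rw [← filter_filter, card_filter]
      _ = ∑ c ∈ C.filter (fun c => c (Sum.inr k) = true), ∑ y : Fin v,
            (if c (Sum.inl y) = true then 1 else 0) := Finset.sum_comm
      _ = ∑ c ∈ C.filter (fun c => c (Sum.inr k) = true), (PS c).card := by
          refine Finset.sum_congr rfl fun c _ => ?_
          rw [← card_filter]; rfl
      _ = ∑ c ∈ C.filter (fun c => c (Sum.inr k) = true), 2 :=
          Finset.sum_congr rfl fun c hc => hP2 c (mem_filter.mp hc).1
      _ = 2 * deg k := by rw [Finset.sum_const, smul_eq_mul, mul_comm]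
  have hdegsum : ∑ k : Fin s, deg k = 2 * C.card := by
    calc ∑ k : Fin s, deg k
        = ∑ k : Fin s, ∑ c ∈ C, (if c (Sum.inr k) = true then 1 else 0) :=
          Finset.sum_congr rfl fun k _ => card_filter _ _
      _ = ∑ c ∈ C, ∑ k : Fin s, (if c (Sum.inr k) = true then 1 else 0) := Finset.sum_comm
      _ = ∑ c ∈ C, (QS c).card := by
          refine Finset.sum_congr rfl fun c _ => ?_
          rw [← card_filter]; rfl
      _ = ∑ c ∈ C, 2 := Finset.sum_congr rfl fun c hc => hQ2 c hc
      _ = 2 * C.card := by rw [Finset.sum_const, smul_eq_mul, mul_comm]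
  have hdegle : ∀ k : Fin s, 2 * deg k ≤ v - 1 := by
    intro k
    have h1 : ∑ y : Fin v, (C.filter (fun c => c (Sum.inr k) = true ∧ c (Sum.inl y) = true)).card
        ≤ ∑ _y : Fin v, 1 := Finset.sum_le_sum fun y _ => hTle y k
    rw [hdeg2 k, Finset.sum_const, smul_eq_mul, mul_one, card_univ, Fintype.card_fin] at h1
    omega
  have hdege : ∀ k : Fin s, 2 * deg k = v - 1 := by
    have hsum : ∑ k : Fin s, 2 * deg k = ∑ _k : Fin s, (v - 1) := by
      calc ∑ k : Fin s, 2 * deg k = 2 * ∑ k : Fin s, deg k := by rw [Finset.mul_sum]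
        _ = 4 * C.card := by rw [hdegsum]; ring
        _ = s * (v - 1) := hsize
        _ = ∑ _k : Fin s, (v - 1) := by
            rw [Finset.sum_const, card_univ, Fintype.card_fin, smul_eq_mul]
    intro k
    exact (Finset.sum_eq_sum_iff_of_le (fun i _ => hdegle i)).mp hsum k (mem_univ k)
  have hrow : ∀ k : Fin s, ∃ x : Fin v, ∀ y : Fin v,
      (univ.filter (fun j => y ∈ A k j)).card + (univ.filter (fun j => y ∈ A j k)).card
        = if y = x then 0 else 1 := by
    intro k
    have hv1 : 1 ≤ v := by omega
    obtain ⟨x, hx⟩ := exists_missing_point v hv1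
      (fun y => (C.filter (fun c : Fin v ⊕ Fin s → Bool => c (Sum.inr k) = true ∧ c (Sum.inl y) = true)).card)
      (fun y => hTle y k) ((hdeg2 k).trans (hdege k))
    exact ⟨x, fun y => (hcnt k y).trans (hx y)⟩
  have hskew' : ∀ i j : Fin s, i ≠ j → A i j = ∅ ∨ A j i = ∅ := by
    intro i j hij
    rcases lt_or_gt_of_ne hij with h | h
    · right; rw [hA]; simp only [if_neg (not_lt_of_gt h)]
    · left; rw [hA]; simp only [if_neg (not_lt_of_gt h)]
  have hdiag' : ∀ i : Fin s, A i i = ∅ := by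
    intro i; rw [hA]; simp only [if_neg (lt_irrefl i)]
  have hcard' : ∀ i j : Fin s, A i j = ∅ ∨ (A i j).card = 2 := by
    intro i j
    rcases eq_empty_or_nonempty (A i j) with h | h
    · left; exact h
    · right
      obtain ⟨c, hc, he, -, -⟩ := hcellE i j h
      rw [he]; exact hP2 c hc
  have huniq' : ∀ i j i' j' : Fin s, ∀ a b : Fin v, a ≠ b →
      a ∈ A i j → b ∈ A i j → a ∈ A i' j' → b ∈ A i' j' → i = i' ∧ j = j' := by
    intro i j i' j' a b hab ha hb ha' hb'
    obtain ⟨c, hc, he, hij, hQc⟩ := hcellE i j ⟨a, ha⟩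
    obtain ⟨c', hc', he', hij', hQc'⟩ := hcellE i' j' ⟨a, ha'⟩
    rw [he] at ha hb
    rw [he'] at ha' hb'
    have h1 : PS c = {a, b} := eq_pair_of_mem (hP2 c hc) hab ha hb
    have h2 : PS c' = {a, b} := eq_pair_of_mem (hP2 c' hc') hab ha' hb'
    have hcc : c = c' := huniqP c hc c' hc' (h1.trans h2.symm)
    subst hcc
    exact pair_eq_lt hij hij' (hQc.symm.trans hQc')
  exact ⟨A, hskew', hdiag', hcard', huniq', hrow⟩


/-- For `v ≡ 1 (mod 4)` and odd `s` with `v ≤ s ≤ 2v-1`, there exists an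
`MCWC(2,v;2,s;6)` of size `s(v-1)/4` if and only if an `SAS(s,v)` exists. -/
theorem mcwc_iff_sas (v s : ℕ) (hv : v % 4 = 1) (hs : s % 2 = 1)
    (h1 : v ≤ s) (h2 : s ≤ 2 * v - 1) :
    (∃ C : Finset (Fin v ⊕ Fin s → Bool),
      (∀ c ∈ C, (univ.filter (fun i : Fin v => c (Sum.inl i) = true)).card = 2) ∧
      (∀ c ∈ C, (univ.filter (fun i : Fin s => c (Sum.inr i) = true)).card = 2) ∧
      (∀ u ∈ C, ∀ w ∈ C, u ≠ w → 6 ≤ hammingDist u w) ∧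
      4 * C.card = s * (v - 1)) ↔
    (∃ A : Fin s → Fin s → Finset (Fin v), IsSAS s v A) := by
  constructor
  · rintro ⟨C, hw1, hw2, hd, hsize⟩
    exact code_to_sas hv C hw1 hw2 hd hsize
  · rintro ⟨A, hA⟩
    exact sas_to_code hv A hA
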